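/- Removal lemma for small sets (quantitative form): Let U be a finite set, Δ ≥ 1 an integer, C > 0 a real number, and let (F_i)_{i∈ι} be a family of subsets of U indexed by a finite set ι with |F_i| ≤ Δ for every i ∈ ι. Then there exist a subset ι' ⊆ ι and a subset U' ⊆ U such that (i) |ι'| ≥ |ι| / (Δ·e^{1+C·Δ²}) + C·|U'| (as real numbers), and (ii) for all distinct i, j ∈ ι' we have F_i ∩ F_j ⊆ U'. -/

import Mathlib

open Finset

theorem removal_key {U : Type*} [DecidableEq U] {ι : Type*} [DecidableEq ι]
    (Δ : ℕ) (hΔ : 1 ≤ Δ) (C : ℝ) (hC : 0 < C) :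
    ∀ (N : ℕ) (F : ι → Finset U) (A : Finset ι),
      (∑ i ∈ A, ((F i).card + 1)) ≤ N → (∀ i ∈ A, (F i).card ≤ Δ) →
      ∃ (ι' : Finset ι) (U' : Finset U), ι' ⊆ A ∧
        (∑ i ∈ A, Real.exp (-(C * Δ * (F i).card))) / (Δ * Real.exp 1)
            + C * U'.card ≤ ι'.card ∧
        ∀ i ∈ ι', ∀ j ∈ ι', i ≠ j → F i ∩ F j ⊆ U' := by
  have hΔ1 : (1:ℝ) ≤ (Δ:ℝ) := by exact_mod_cast hΔ
  have hx : (0:ℝ) < C * Δ := by positivity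
  set x : ℝ := C * Δ with hxdef
  have hxe : x < Real.exp x - 1 := by
    have := Real.add_one_lt_exp (x := x) (by positivity)
    linarith
  have hexm : (0:ℝ) < Real.exp x - 1 := by linarith
  set T : ℝ := x * Real.exp 1 / (Real.exp x - 1) with hTdef
  have hTpos : 0 < T := by positivity
  have hTe : T ≤ Real.exp 1 := by
    rw [hTdef, div_le_iff₀ hexm]
    have h1 : (0:ℝ) < Real.exp 1 := Real.exp_pos 1
    nlinarith
  have he1 : (1:ℝ) ≤ Real.exp 1 := Real.one_le_exp (by norm_num)
  have hDe : (0:ℝ) < (Δ : ℝ) * Real.exp 1 := by positivity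
  intro N
  induction N with
  | zero =>
    intro F A hN hF
    have hA : A = ∅ := by
      by_contra h
      obtain ⟨i, hi⟩ := Finset.nonempty_iff_ne_empty.2 h
      have : (F i).card + 1 ≤ ∑ i ∈ A, ((F i).card + 1) :=
        Finset.single_le_sum (f := fun i => (F i).card + 1) (fun _ _ => Nat.zero_le _) hi
      omega
    subst hA
    exact ⟨∅, ∅, by simp, by simp, by simp⟩
  | succ N ih =>
    intro F A hN hF
    by_cases hA : A = ∅
    · subst hA
      exact ⟨∅, ∅, by simp, by simp, by simp⟩
    by_cases hu : ∃ u : U, T ≤ ∑ i ∈ A.filter (fun i => u ∈ F i), Real.exp (-(x * (F i).card))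
    · -- high degree case
      obtain ⟨u, hudeg⟩ := hu
      set S := A.filter (fun i => u ∈ F i) with hSdef
      have hSne : S.Nonempty := by
        by_contra h
        rw [Finset.not_nonempty_iff_eq_empty] at h
        rw [h, Finset.sum_empty] at hudeg
        linarith
      set F' : ι → Finset U := fun i => (F i).erase u with hF'def
      have hmeas : (∑ i ∈ A, ((F' i).card + 1)) ≤ N := by
        have hlt : (∑ i ∈ A, ((F' i).card + 1)) < ∑ i ∈ A, ((F i).card + 1) := by
          obtain ⟨i₀, hi₀⟩ := hSne
          apply Finset.sum_lt_sum (fun i _ => by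
            have := Finset.card_erase_le (a := u) (s := F i)
            simp only [hF'def]
            omega)
          refine ⟨i₀, (Finset.mem_filter.1 hi₀).1, ?_⟩
          have hu0 : u ∈ F i₀ := (Finset.mem_filter.1 hi₀).2
          have := Finset.card_erase_of_mem hu0
          have hc : 1 ≤ (F i₀).card := Finset.card_pos.2 ⟨u, hu0⟩
          simp only [hF'def]
          omega
        omega
      obtain ⟨ι', U'', hsub, hcard, hpair⟩ := ih F' A hmeas
        (fun i hi => le_trans (Finset.card_le_card (Finset.erase_subset _ _)) (hF i hi))
      refine ⟨ι', insert u U'', hsub, ?_, ?_⟩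
      · -- weight gain
        have hW' : (∑ i ∈ A, Real.exp (-(x * (F i).card))) + x * Real.exp 1
            ≤ ∑ i ∈ A, Real.exp (-(x * (F' i).card)) := by
          have e1 := Finset.sum_filter_add_sum_filter_not A (fun i => u ∈ F i)
            (fun i => Real.exp (-(x * (F i).card)))
          have e2 := Finset.sum_filter_add_sum_filter_not A (fun i => u ∈ F i)
            (fun i => Real.exp (-(x * (F' i).card)))
          have enot : ∑ i ∈ A.filter (fun i => ¬ u ∈ F i), Real.exp (-(x * (F' i).card))
              = ∑ i ∈ A.filter (fun i => ¬ u ∈ F i), Real.exp (-(x * (F i).card)) := by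
            apply Finset.sum_congr rfl
            intro i hi
            have : F' i = F i := Finset.erase_eq_of_notMem (Finset.mem_filter.1 hi).2
            rw [this]
          have estar : ∑ i ∈ S, Real.exp (-(x * (F' i).card))
              = Real.exp x * ∑ i ∈ S, Real.exp (-(x * (F i).card)) := by
            rw [Finset.mul_sum]
            apply Finset.sum_congr rfl
            intro i hi
            have hui : u ∈ F i := (Finset.mem_filter.1 hi).2
            have hc : 1 ≤ (F i).card := Finset.card_pos.2 ⟨u, hui⟩
            have hcast : (((F i).card - 1 : ℕ) : ℝ) = ((F i).card : ℝ) - 1 := by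
              push_cast [hc]; ring
            have : F' i = (F i).erase u := rfl
            rw [this, Finset.card_erase_of_mem hui, hcast, ← Real.exp_add]
            congr 1
            ring
          have hTmul : (Real.exp x - 1) * T = x * Real.exp 1 := by
            rw [hTdef]
            field_simp
          have hgain : x * Real.exp 1 ≤ (Real.exp x - 1) * ∑ i ∈ S, Real.exp (-(x * (F i).card)) := by
            rw [← hTmul]
            exact mul_le_mul_of_nonneg_left hudeg (le_of_lt hexm)
          rw [← e1, ← e2, enot, estar]
          nlinarith [hgain]
        have hUcard : ((insert u U'').card : ℝ) ≤ (U''.card : ℝ) + 1 := by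
          exact_mod_cast Finset.card_insert_le u U''
        have hCeq : (x * Real.exp 1) / ((Δ:ℝ) * Real.exp 1) = C := by
          rw [hxdef]
          field_simp
        have hdiv : (∑ i ∈ A, Real.exp (-(x * (F i).card))) / ((Δ:ℝ) * Real.exp 1) + C
            ≤ (∑ i ∈ A, Real.exp (-(x * (F' i).card))) / ((Δ:ℝ) * Real.exp 1) := by
          rw [← hCeq, ← add_div]
          exact (div_le_div_iff_of_pos_right hDe).2 hW'
        nlinarith [hcard, hUcard, hdiv, hC]
      · intro i hi j hj hij v hv
        rcases Finset.mem_inter.1 hv with ⟨hv1, hv2⟩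
        by_cases hvu : v = u
        · simp [hvu]
        · have : v ∈ F' i ∩ F' j := Finset.mem_inter.2
            ⟨Finset.mem_erase.2 ⟨hvu, hv1⟩, Finset.mem_erase.2 ⟨hvu, hv2⟩⟩
          exact Finset.mem_insert_of_mem (hpair i hi j hj hij this)
    · -- low degree case
      push_neg at hu
      obtain ⟨i₀, hi₀⟩ := Finset.nonempty_iff_ne_empty.2 hA
      by_cases hemp : F i₀ = ∅
      · -- an empty set: put it in the matching
        have hmeas : ∑ i ∈ A.erase i₀, ((F i).card + 1) ≤ N := by
          have h2 : (∑ i ∈ A.erase i₀, ((F i).card + 1)) + ((F i₀).card + 1)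
              = ∑ i ∈ A, ((F i).card + 1) := Finset.sum_erase_add A _ hi₀
          omega
        obtain ⟨ι'', U', hsub, hcard, hpair⟩ := ih F (A.erase i₀) hmeas
          (fun i hi => hF i (Finset.mem_of_mem_erase hi))
        have hi₀n : i₀ ∉ ι'' := fun h => (Finset.mem_erase.1 (hsub h)).1 rfl
        refine ⟨insert i₀ ι'', U', ?_, ?_, ?_⟩
        · intro j hj
          rcases Finset.mem_insert.1 hj with h | h
          · exact h ▸ hi₀
          · exact Finset.mem_of_mem_erase (hsub h)
        · have hWsplit : ∑ i ∈ A, Real.exp (-(x * (F i).card))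
              = (∑ i ∈ A.erase i₀, Real.exp (-(x * (F i).card)))
                + Real.exp (-(x * (F i₀).card)) :=
            (Finset.sum_erase_add A _ hi₀).symm
          have hw0 : Real.exp (-(x * ((F i₀).card:ℝ))) = 1 := by
            rw [hemp]; simp
          have hcardins : ((insert i₀ ι'').card : ℝ) = (ι''.card : ℝ) + 1 := by
            rw [Finset.card_insert_of_notMem hi₀n]; push_cast; ring
          have h1De : 1 / ((Δ:ℝ) * Real.exp 1) ≤ 1 := by
            rw [div_le_one hDe]; nlinarith
          rw [hWsplit, hw0, add_div, hcardins]
          linarith [hcard, h1De]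
        · intro i hi j hj hij v hv
          rcases Finset.mem_insert.1 hi with h | h
          · subst h
            rw [hemp] at hv
            simp at hv
          · rcases Finset.mem_insert.1 hj with h' | h'
            · subst h'
              rw [hemp, Finset.inter_empty] at hv
              simp at hv
            · exact hpair i h j h' hij hv
      · -- greedy step
        set B := A.filter (fun j => ((F i₀) ∩ (F j)).Nonempty) with hBdef
        have hi₀B : i₀ ∈ B := by
          refine Finset.mem_filter.2 ⟨hi₀, ?_⟩
          rw [Finset.inter_self]
          exact Finset.nonempty_iff_ne_empty.2 hemp
        set A' := A.filter (fun j => ¬ ((F i₀) ∩ (F j)).Nonempty) with hA'def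
        have hsplitN : (∑ i ∈ B, ((F i).card + 1)) + (∑ i ∈ A', ((F i).card + 1))
            = ∑ i ∈ A, ((F i).card + 1) :=
          Finset.sum_filter_add_sum_filter_not A (fun j => ((F i₀) ∩ (F j)).Nonempty) _
        have hmeas : ∑ i ∈ A', ((F i).card + 1) ≤ N := by
          have h1 : (F i₀).card + 1 ≤ ∑ i ∈ B, ((F i).card + 1) :=
            Finset.single_le_sum (f := fun i => (F i).card + 1) (fun _ _ => Nat.zero_le _) hi₀B
          omega
        obtain ⟨ι'', U', hsub, hcard, hpair⟩ := ih F A' hmeas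
          (fun i hi => hF i (Finset.mem_filter.1 hi).1)
        have hi₀n : i₀ ∉ A' := by
          intro h
          exact (Finset.mem_filter.1 h).2
            (by rw [Finset.inter_self]; exact Finset.nonempty_iff_ne_empty.2 hemp)
        have hi₀ι : i₀ ∉ ι'' := fun h => hi₀n (hsub h)
        refine ⟨insert i₀ ι'', U', ?_, ?_, ?_⟩
        · intro j hj
          rcases Finset.mem_insert.1 hj with h | h
          · exact h ▸ hi₀
          · exact (Finset.mem_filter.1 (hsub h)).1
        · -- weight bound
          have hB : ∑ i ∈ B, Real.exp (-(x * (F i).card)) ≤ (Δ:ℝ) * Real.exp 1 := by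
            have step1 : ∑ i ∈ B, Real.exp (-(x * (F i).card))
                ≤ ∑ i ∈ B, (((F i₀) ∩ (F i)).card : ℝ) * Real.exp (-(x * (F i).card)) := by
              apply Finset.sum_le_sum
              intro i hi
              have hne := (Finset.mem_filter.1 hi).2
              have h1 : (1:ℝ) ≤ (((F i₀) ∩ (F i)).card : ℝ) := by
                exact_mod_cast Finset.card_pos.2 hne
              nlinarith [Real.exp_pos (-(x * ((F i).card:ℝ)))]
            have step2 : ∑ i ∈ B, (((F i₀) ∩ (F i)).card : ℝ) * Real.exp (-(x * (F i).card))
                ≤ ∑ i ∈ A, (((F i₀) ∩ (F i)).card : ℝ) * Real.exp (-(x * (F i).card)) :=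
              Finset.sum_le_sum_of_subset_of_nonneg (Finset.filter_subset _ _)
                (fun i _ _ => by positivity)
            have step3 : ∑ i ∈ A, (((F i₀) ∩ (F i)).card : ℝ) * Real.exp (-(x * (F i).card))
                = ∑ u ∈ F i₀, ∑ i ∈ A.filter (fun i => u ∈ F i), Real.exp (-(x * (F i).card)) := by
              have inner : ∀ i, (((F i₀) ∩ (F i)).card : ℝ) * Real.exp (-(x * (F i).card))
                  = ∑ u ∈ F i₀, (if u ∈ F i then Real.exp (-(x * (F i).card)) else 0) := by
                intro i
                rw [← Finset.sum_filter, Finset.sum_const, Finset.filter_mem_eq_inter,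
                  nsmul_eq_mul]
              calc ∑ i ∈ A, (((F i₀) ∩ (F i)).card : ℝ) * Real.exp (-(x * (F i).card))
                  = ∑ i ∈ A, ∑ u ∈ F i₀, (if u ∈ F i then Real.exp (-(x * (F i).card)) else 0) :=
                    Finset.sum_congr rfl (fun i _ => inner i)
                _ = ∑ u ∈ F i₀, ∑ i ∈ A, (if u ∈ F i then Real.exp (-(x * (F i).card)) else 0) :=
                    Finset.sum_comm
                _ = ∑ u ∈ F i₀, ∑ i ∈ A.filter (fun i => u ∈ F i), Real.exp (-(x * (F i).card)) :=
                    Finset.sum_congr rfl (fun u _ => (Finset.sum_filter _ _).symm)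
            have step4 : ∑ u ∈ F i₀, ∑ i ∈ A.filter (fun i => u ∈ F i), Real.exp (-(x * (F i).card))
                ≤ ∑ _u ∈ F i₀, T :=
              Finset.sum_le_sum (fun u _ => le_of_lt (hu u))
            have step5 : ∑ _u ∈ F i₀, T = ((F i₀).card : ℝ) * T := by
              rw [Finset.sum_const, nsmul_eq_mul]
            have hcΔ : ((F i₀).card : ℝ) ≤ (Δ:ℝ) := by exact_mod_cast hF i₀ hi₀
            calc ∑ i ∈ B, Real.exp (-(x * (F i).card)) ≤ _ := step1
              _ ≤ _ := step2
              _ = _ := step3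
              _ ≤ ∑ _u ∈ F i₀, T := step4
              _ = ((F i₀).card : ℝ) * T := step5
              _ ≤ (Δ:ℝ) * Real.exp 1 := by nlinarith
          have hWsplit : (∑ i ∈ B, Real.exp (-(x * (F i).card)))
              + (∑ i ∈ A', Real.exp (-(x * (F i).card)))
              = ∑ i ∈ A, Real.exp (-(x * (F i).card)) :=
            Finset.sum_filter_add_sum_filter_not A (fun j => ((F i₀) ∩ (F j)).Nonempty) _
          have hBdiv : (∑ i ∈ B, Real.exp (-(x * (F i).card))) / ((Δ:ℝ) * Real.exp 1) ≤ 1 := by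
            rw [div_le_one hDe]; exact hB
          have hcardins : ((insert i₀ ι'').card : ℝ) = (ι''.card : ℝ) + 1 := by
            rw [Finset.card_insert_of_notMem hi₀ι]; push_cast; ring
          rw [← hWsplit, add_div, hcardins]
          linarith [hcard, hBdiv]
        · intro i hi j hj hij v hv
          rcases Finset.mem_insert.1 hi with h | h
          · rcases Finset.mem_insert.1 hj with h' | h'
            · exact absurd (h.trans h'.symm) hij
            · have hj' : ¬ ((F i₀) ∩ (F j)).Nonempty := (Finset.mem_filter.1 (hsub h')).2
              rw [Finset.not_nonempty_iff_eq_empty] at hj'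
              rw [h, hj'] at hv
              simp at hv
          · rcases Finset.mem_insert.1 hj with h' | h'
            · have hi' : ¬ ((F i₀) ∩ (F i)).Nonempty := (Finset.mem_filter.1 (hsub h)).2
              rw [Finset.not_nonempty_iff_eq_empty] at hi'
              rw [h', Finset.inter_comm, hi'] at hv
              simp at hv
            · exact hpair i h j h' hij hv


/-- **Removal lemma for small sets (quantitative form).**
`U` is a finite type (the universe), `F : ι → Finset U` a family of subsets of `U`
indexed by a finite type `ι`, with `|F i| ≤ Δ` for all `i`.  Then there exist
`ι' ⊆ ι` and `U' ⊆ U` such that `|ι'| ≥ |ι| / (Δ · e^{1 + C·Δ²}) + C·|U'|`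
and the sets `F i`, `i ∈ ι'`, are pairwise disjoint outside of `U'`. -/
theorem removal_lemma_for_small_sets
    {U : Type*} [Fintype U] [DecidableEq U] {ι : Type*} [Fintype ι]
    (Δ : ℕ) (hΔ : 1 ≤ Δ) (C : ℝ) (hC : 0 < C)
    (F : ι → Finset U) (hF : ∀ i, (F i).card ≤ Δ) :
    ∃ (ι' : Finset ι) (U' : Finset U),
      (Fintype.card ι : ℝ) / (Δ * Real.exp (1 + C * Δ ^ 2)) + C * U'.card ≤ ι'.card ∧
      ∀ i ∈ ι', ∀ j ∈ ι', i ≠ j → F i ∩ F j ⊆ U' := by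
  classical
  obtain ⟨ι', U', -, hcard, hpair⟩ :=
    removal_key Δ hΔ C hC (∑ i ∈ (Finset.univ : Finset ι), ((F i).card + 1)) F
      Finset.univ le_rfl (fun i _ => hF i)
  refine ⟨ι', U', le_trans ?_ hcard, hpair⟩
  have hΔ1 : (1:ℝ) ≤ (Δ:ℝ) := by exact_mod_cast hΔ
  have hDe : (0:ℝ) < (Δ:ℝ) * Real.exp 1 := by positivity
  have hW : (Fintype.card ι : ℝ) * Real.exp (-(C * Δ * Δ))
      ≤ ∑ i ∈ (Finset.univ : Finset ι), Real.exp (-(C * Δ * (F i).card)) := by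
    have : ∀ i ∈ (Finset.univ : Finset ι),
        Real.exp (-(C * Δ * Δ)) ≤ Real.exp (-(C * Δ * (F i).card)) := by
      intro i _
      apply Real.exp_le_exp.2
      have h2 : ((F i).card : ℝ) ≤ (Δ:ℝ) := by exact_mod_cast hF i
      have h3 := mul_le_mul_of_nonneg_left h2 (by positivity : (0:ℝ) ≤ C * Δ)
      linarith
    calc (Fintype.card ι : ℝ) * Real.exp (-(C * Δ * Δ))
        = ∑ _i ∈ (Finset.univ : Finset ι), Real.exp (-(C * Δ * Δ)) := by
          rw [Finset.sum_const, nsmul_eq_mul, Finset.card_univ]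
      _ ≤ _ := Finset.sum_le_sum this
  have heq : (Fintype.card ι : ℝ) / ((Δ:ℝ) * Real.exp (1 + C * Δ ^ 2))
      = (Fintype.card ι : ℝ) * Real.exp (-(C * Δ * Δ)) / ((Δ:ℝ) * Real.exp 1) := by
    rw [div_eq_div_iff (by positivity) (ne_of_gt hDe)]
    have hmul : Real.exp (-(C * ↑Δ * ↑Δ)) * Real.exp (1 + C * ↑Δ ^ 2) = Real.exp 1 := by
      rw [← Real.exp_add]
      congr 1
      ring
    rw [← hmul]
    ring
  rw [heq]
  apply add_le_add_left
  exact (div_le_div_iff_of_pos_right hDe).2 hW
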